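/- Define subspaces of Iuₙ by F₀ = Iuₙ, F_p = span({x_{ij} : λ(i,j) ≥ p} ∪ {b_i : 1 ≤ i ≤ n}) for 1 ≤ p ≤ n, and F_p = 0 for p > n. Then this is a Lie algebra filtration: [F_p, F_q] ⊆ F_{p+q} for all p, q ≥ 0. In particular, [F_p, F_q] = 0 whenever p + q > n. -/

import Mathlib

/-- Index set for the basis of `Iuₙ`: the off-diagonal pairs indexing the `x_{ij}` (`i ≠ j`),
then the `a_i`'s, then the `b_i`'s. -/
abbrev IuIdx (n : ℕ) : Type := { p : Fin n × Fin n // p.1 ≠ p.2 } ⊕ (Fin n ⊕ Fin n)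

/-- `Iuₙ`: the free `K`-vector space on the basis `{x_{ij} : i ≠ j} ∪ {a_i} ∪ {b_i}`. -/
abbrev Iu (n : ℕ) (K : Type*) [Field K] : Type _ := IuIdx n →₀ K

variable (n : ℕ) (K : Type*) [Field K]

/-- The basis element `x_{ij}` (`i ≠ j`). -/
noncomputable def xE (i j : Fin n) (h : i ≠ j) : Iu n K :=
  Finsupp.single (Sum.inl ⟨(i, j), h⟩) 1

/-- The basis element `a_i`. -/
noncomputable def aE (i : Fin n) : Iu n K := Finsupp.single (Sum.inr (Sum.inl i)) 1

/-- The basis element `b_i`. -/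
noncomputable def bE (i : Fin n) : Iu n K := Finsupp.single (Sum.inr (Sum.inr i)) 1

/-- `x_{ij}` as a total function (junk value `0` when `i = j`). -/
noncomputable def xe (i j : Fin n) : Iu n K := if h : i ≠ j then xE n K i j h else 0

/-- The length `λ(i,j)`: equals `j - i` if `i < j`, and `n - (i - j)` if `i > j`. -/
def lam (n : ℕ) (i j : Fin n) : ℕ := (j - i : Fin n).val

/-- The bracket of `Iuₙ` on basis elements:
`[x_{ij}, x_{kl}] = δ_{jk} x_{il} - δ_{li} x_{kj}` if `λ(i,j) + λ(k,l) < n` and `0` otherwise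
(unless both `j = k` and `l = i`); `[x_{ij}, x_{ji}] = ½(b_i - b_j)`;
`[a_i, x_{jk}] = (δ_{ij} - δ_{ik}) x_{jk}`; `[b_i, x_{jk}] = 0`;
`[a_i, a_j] = [b_i, b_j] = [a_i, b_j] = 0`; extended antisymmetrically. -/
noncomputable def bb : IuIdx n → IuIdx n → Iu n K
  | Sum.inl ⟨(i, j), _⟩, Sum.inl ⟨(k, l), _⟩ =>
      if k = j ∧ l = i then ((2 : K)⁻¹) • (bE n K i - bE n K j)
      else if lam n i j + lam n k l < n then
        (if j = k then xe n K i l else 0) - (if l = i then xe n K k j else 0)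
      else 0
  | Sum.inr (Sum.inl i), Sum.inl ⟨(j, k), _⟩ =>
      (((if i = j then 1 else 0) : K) - ((if i = k then 1 else 0) : K)) • xe n K j k
  | Sum.inl ⟨(j, k), _⟩, Sum.inr (Sum.inl i) =>
      -((((if i = j then 1 else 0) : K) - ((if i = k then 1 else 0) : K)) • xe n K j k)
  | _, _ => 0

/-- The bilinear bracket of `Iuₙ`, extended bilinearly from its values on basis elements. -/
noncomputable def br : Iu n K →ₗ[K] Iu n K →ₗ[K] Iu n K :=
  Finsupp.lift (Iu n K →ₗ[K] Iu n K) K (IuIdx n) fun s =>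
    Finsupp.lift (Iu n K) K (IuIdx n) fun t => bb n K s t

/-- The filtration of `Iuₙ`: `F 0 = Iuₙ`, `F p = span({x_{ij} : λ(i,j) ≥ p} ∪ {b_i})` for
`1 ≤ p ≤ n`, and `F p = 0` for `p > n`. -/
noncomputable def filt (p : ℕ) : Submodule K (Iu n K) :=
  if p = 0 then ⊤
  else if p ≤ n then
    Submodule.span K
      ({v | ∃ (i j : Fin n) (h : i ≠ j), p ≤ lam n i j ∧ v = xE n K i j h} ∪
        {v | ∃ i : Fin n, v = bE n K i})
  else ⊥
section Aux

variable {n : ℕ} {K : Type*} [Field K]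

lemma lam_lt (i j : Fin n) : lam n i j < n := (j - i).isLt

lemma lam_pos {i j : Fin n} (h : i ≠ j) : 0 < lam n i j := by
  haveI : NeZero n := ⟨(Fin.pos i).ne'⟩
  have h0 : (j - i : Fin n) ≠ 0 := sub_ne_zero_of_ne h.symm
  have hne : lam n i j ≠ 0 := by
    intro hv
    exact h0 (Fin.ext (by simpa [lam] using hv))
  omega

lemma lam_trans {i j l : Fin n} (h : lam n i j + lam n j l < n) :
    lam n i l = lam n i j + lam n j l := by
  haveI : NeZero n := ⟨(Fin.pos i).ne'⟩
  have e : (l - i : Fin n) = (j - i) + (l - j) := by abel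
  show (l - i : Fin n).val = _
  rw [e, Fin.val_add]
  exact Nat.mod_eq_of_lt h

lemma lam_cycle {i j : Fin n} (h : i ≠ j) : lam n i j + lam n j i = n := by
  haveI : NeZero n := ⟨(Fin.pos i).ne'⟩
  have e : ((j - i) + (i - j) : Fin n) = 0 := by abel
  have hv : (lam n i j + lam n j i) % n = 0 := by
    have := congrArg Fin.val e
    rwa [Fin.val_add] at this
  have h1 := lam_pos h
  have h2 := lam_pos h.symm
  have h3 := lam_lt i j
  have h4 := lam_lt j i
  rcases Nat.lt_or_ge (lam n i j + lam n j i) n with hc | hc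
  · rw [Nat.mod_eq_of_lt hc] at hv; omega
  · rw [Nat.mod_eq_sub_mod hc, Nat.mod_eq_of_lt (by omega)] at hv; omega

lemma xE_mem_filt {p : ℕ} {i j : Fin n} (h : i ≠ j) (hp : p ≤ lam n i j) :
    xE n K i j h ∈ filt n K p := by
  by_cases h0 : p = 0
  · simp [filt, h0]
  · have hpn : p ≤ n := le_of_lt (lt_of_le_of_lt hp (lam_lt i j))
    unfold filt
    rw [if_neg h0, if_pos hpn]
    exact Submodule.subset_span (Or.inl ⟨i, j, h, hp, rfl⟩)

lemma bE_mem_filt {p : ℕ} (hp : p ≤ n) (i : Fin n) : bE n K i ∈ filt n K p := by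
  by_cases h0 : p = 0
  · simp [filt, h0]
  · unfold filt
    rw [if_neg h0, if_pos hp]
    exact Submodule.subset_span (Or.inr ⟨i, rfl⟩)

/-- Generator indices for `filt n K p`. -/
def genSet (n p : ℕ) : Set (IuIdx n) := {s | match s with
  | Sum.inl ⟨(i, j), _⟩ => p ≤ lam n i j
  | Sum.inr (Sum.inl _) => p = 0
  | Sum.inr (Sum.inr _) => p ≤ n}

lemma filt_eq_span (p : ℕ) :
    filt n K p = Submodule.span K ((fun s => Finsupp.single s (1 : K)) '' genSet n p) := by
  rcases Nat.eq_zero_or_pos p with rfl | hp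
  · have hg : genSet n 0 = Set.univ := by
      ext s
      rcases s with ⟨⟨i, j⟩, h⟩ | (i | i) <;> simp [genSet]
    rw [hg, Set.image_univ]
    unfold filt
    rw [if_pos rfl]
    symm
    have := (Finsupp.basisSingleOne : Module.Basis (IuIdx n) K (IuIdx n →₀ K)).span_eq
    simpa [Finsupp.coe_basisSingleOne] using this
  · by_cases hpn : p ≤ n
    · unfold filt
      rw [if_neg (by omega), if_pos hpn]
      congr 1
      ext v
      constructor
      · rintro (⟨i, j, h, hle, rfl⟩ | ⟨i, rfl⟩)
        · exact ⟨Sum.inl ⟨(i, j), h⟩, hle, rfl⟩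
        · exact ⟨Sum.inr (Sum.inr i), hpn, rfl⟩
      · rintro ⟨s, hs, rfl⟩
        rcases s with ⟨⟨i, j⟩, h⟩ | (i | i)
        · exact Or.inl ⟨i, j, h, hs, rfl⟩
        · exact absurd hs (by simp [genSet]; omega)
        · exact Or.inr ⟨i, rfl⟩
    · have hg : genSet n p = ∅ := by
        ext s
        rcases s with ⟨⟨i, j⟩, h⟩ | (i | i) <;> simp [genSet]
        · have := lam_lt i j; omega
        · omega
        · omega
      unfold filt
      rw [if_neg (by omega), if_neg hpn, hg]
      simp

lemma br_single (s t : IuIdx n) :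
    br n K (Finsupp.single s 1) (Finsupp.single t 1) = bb n K s t := by
  simp [br, Finsupp.lift_apply, Finsupp.sum_single_index]

lemma bb_mem (p q : ℕ) (s t : IuIdx n) (hs : s ∈ genSet n p) (ht : t ∈ genSet n q) :
    bb n K s t ∈ filt n K (p + q) := by
  rcases s with ⟨⟨i, j⟩, hij⟩ | (a | b)
  · rcases t with ⟨⟨k, l⟩, hkl⟩ | (a | b)
    · replace hs : p ≤ lam n i j := hs
      replace ht : q ≤ lam n k l := ht
      replace hij : i ≠ j := hij
      simp only [bb]
      by_cases h1 : k = j ∧ l = i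
      · rw [if_pos h1]
        rw [h1.1, h1.2] at ht
        have hpq : p + q ≤ n := by
          have := lam_cycle hij
          omega
        exact Submodule.smul_mem _ _
          (Submodule.sub_mem _ (bE_mem_filt hpq i) (bE_mem_filt hpq j))
      · rw [if_neg h1]
        by_cases h2 : lam n i j + lam n k l < n
        · rw [if_pos h2]
          apply Submodule.sub_mem
          · by_cases hjk : j = k
            · rw [if_pos hjk]
              rw [← hjk] at ht h2
              have hil : i ≠ l := by
                intro e
                exact h1 ⟨hjk.symm, e.symm⟩
              have htr := lam_trans (i := i) (j := j) (l := l) h2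
              rw [xe, dif_pos hil]
              exact xE_mem_filt hil (by omega)
            · rw [if_neg hjk]
              exact Submodule.zero_mem _
          · by_cases hli : l = i
            · rw [if_pos hli]
              rw [hli] at ht h2
              have hkj : k ≠ j := by
                intro e
                exact h1 ⟨e, hli⟩
              have htr := lam_trans (i := k) (j := i) (l := j) (by omega)
              rw [xe, dif_pos hkj]
              exact xE_mem_filt hkj (by omega)
            · rw [if_neg hli]
              exact Submodule.zero_mem _
        · rw [if_neg h2]
          exact Submodule.zero_mem _
    · replace hs : p ≤ lam n i j := hs
      replace ht : q = 0 := ht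
      subst ht
      simp only [bb, Nat.add_zero]
      apply Submodule.neg_mem
      apply Submodule.smul_mem
      rw [xe, dif_pos hij]
      exact xE_mem_filt hij hs
    · exact Submodule.zero_mem _
  · rcases t with ⟨⟨k, l⟩, hkl⟩ | (c | c)
    · replace hs : p = 0 := hs
      replace ht : q ≤ lam n k l := ht
      subst hs
      simp only [bb, Nat.zero_add]
      apply Submodule.smul_mem
      rw [xe, dif_pos hkl]
      exact xE_mem_filt hkl ht
    · exact Submodule.zero_mem _
    · exact Submodule.zero_mem _
  · rcases t with ⟨⟨k, l⟩, hkl⟩ | (c | c) <;> exact Submodule.zero_mem _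

end Aux

set_option maxHeartbeats 1000000


/-- the `F p` form a Lie algebra filtration, `[F_p, F_q] ⊆ F_{p+q}`;
in particular `[F_p, F_q] = 0` whenever `p + q > n`. -/
theorem stmt9 (n : ℕ) (hn : 2 ≤ n) (K : Type*) [Field K] (hK : (2 : K) ≠ 0) :
    (∀ p q : ℕ, ∀ u ∈ filt n K p, ∀ v ∈ filt n K q, br n K u v ∈ filt n K (p + q)) ∧
    (∀ p q : ℕ, n < p + q → ∀ u ∈ filt n K p, ∀ v ∈ filt n K q, br n K u v = 0) := by
  have part1 : ∀ p q : ℕ, ∀ u ∈ filt n K p, ∀ v ∈ filt n K q,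
      br n K u v ∈ filt n K (p + q) := by
    intro p q u hu v hv
    rw [filt_eq_span] at hu hv
    have key : ∀ s ∈ genSet n p, ∀ t ∈ genSet n q,
        br n K (Finsupp.single s 1) (Finsupp.single t 1) ∈ filt n K (p + q) := by
      intro s hs t ht
      rw [br_single]
      exact bb_mem p q s t hs ht
    have step1 : ∀ s ∈ genSet n p, br n K (Finsupp.single s 1) v ∈ filt n K (p + q) := by
      intro s hs
      have hle : Submodule.span K ((fun t => Finsupp.single t (1 : K)) '' genSet n q) ≤
          (filt n K (p + q)).comap (br n K (Finsupp.single s 1)) := by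
        rw [Submodule.span_le]
        rintro _ ⟨t, ht, rfl⟩
        exact key s hs t ht
      exact Submodule.mem_comap.mp (hle hv)
    have step2 : Submodule.span K ((fun s => Finsupp.single s (1 : K)) '' genSet n p) ≤
        (filt n K (p + q)).comap ((br n K).flip v) := by
      rw [Submodule.span_le]
      rintro _ ⟨s, hs, rfl⟩
      exact step1 s hs
    exact Submodule.mem_comap.mp (step2 hu)
  refine ⟨part1, fun p q hpq u hu v hv => ?_⟩
  have hm := part1 p q u hu v hv
  have h0 : filt n K (p + q) = ⊥ := by
    unfold filt
    rw [if_neg (by omega), if_neg (by omega)]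
  rw [h0] at hm
  simpa using hm
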